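/- arXiv:math/0506515 — 2 statements merged into one kernel-verified Lean document; each statement's English description precedes it below -/
import Mathlib

section
/- Let G be a finite abelian p-group of rank t ≥ 1, H a subgroup of G of order p, and π : G → G/H the natural projection. Then there exist elements g₁, …, g_t of G such that the internal product of the cyclic subgroups ⟨g₁⟩, …, ⟨g_t⟩ is direct and equal to G, and the internal product of ⟨π(g₁)⟩, …, ⟨π(g_t)⟩ is direct and equal to G/H. -/
open Subgroup AddSubgroup


/-- Order isomorphism on additive subgroups induced by an `AddEquiv`. -/
@[simps]
def mapAddSubgroupIso {A B : Type*} [AddGroup A] [AddGroup B] (f : A ≃+ B) :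
    AddSubgroup A ≃o AddSubgroup B where
  toFun := AddSubgroup.map f.toAddMonoidHom
  invFun := AddSubgroup.map f.symm.toAddMonoidHom
  left_inv sg := by simp [AddSubgroup.map_map]
  right_inv sh := by simp [AddSubgroup.map_map]
  map_rel_iff' {s1 s2} :=
    ⟨fun h => by simpa [AddSubgroup.map_map] using
      AddSubgroup.map_mono (f := (f.symm : B →+ A)) h, AddSubgroup.map_mono⟩

lemma pi_basis {ι : Type*} [Fintype ι] [DecidableEq ι] {M : ι → Type*}
    [∀ i, AddCommGroup (M i)] (c : ∀ i, M i) (hc : ∀ i, zmultiples (c i) = ⊤) :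
    iSupIndep (fun i => zmultiples (Pi.single i (c i) : ∀ i, M i)) ∧
      (⨆ i, zmultiples (Pi.single i (c i) : ∀ i, M i)) = ⊤ := by
  constructor
  · intro i
    rw [AddSubgroup.disjoint_def]
    intro y h1 h2
    obtain ⟨n, hn⟩ := h1
    dsimp only at hn
    have hker : (⨆ (k) (_ : k ≠ i), zmultiples (Pi.single k (c k) : ∀ i, M i)) ≤
        (Pi.evalAddMonoidHom M i).ker := by
      refine iSup₂_le fun k hk => zmultiples_le.2 ?_
      simp only [AddMonoidHom.mem_ker, Pi.evalAddMonoidHom_apply]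
      exact Pi.single_eq_of_ne (Ne.symm hk) (c k)
    have hyi : y i = 0 := hker h2
    have hy : y = Pi.single i (n • c i) := by rw [Pi.single_smul, hn]
    have : n • c i = 0 := by rw [hy] at hyi; simpa using hyi
    rw [hy, this, Pi.single_zero]
  · rw [eq_top_iff]
    intro x _
    have hx : x = ∑ k, Pi.single k (x k) := by
      funext i
      rw [Finset.sum_apply]
      exact (Fintype.sum_pi_single i x).symm
    rw [hx]
    refine sum_mem fun k _ => ?_
    have : x k ∈ zmultiples (c k) := by rw [hc k]; trivial
    obtain ⟨n, hn⟩ := this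
    refine le_iSup (fun k => zmultiples (Pi.single k (c k) : ∀ i, M i)) k ⟨n, ?_⟩
    dsimp only
    dsimp only at hn
    rw [← Pi.single_smul, hn]

lemma pi_adapted (p : ℕ) (hp : p.Prime) {ι : Type*} [Fintype ι] [DecidableEq ι] (e : ι → ℕ)
    (he : ∀ i, 1 ≤ e i) (h : ∀ i, ZMod (p ^ e i)) (hh : p • h = 0) (hne : h ≠ 0) :
    ∃ (g : ι → ∀ i, ZMod (p ^ e i)) (j : ι),
      iSupIndep (fun i => zmultiples (g i)) ∧
      (⨆ i, zmultiples (g i)) = ⊤ ∧ h ∈ zmultiples (g j) := by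
  haveI : ∀ i, NeZero (p ^ e i) := fun i => ⟨pow_ne_zero _ hp.pos.ne'⟩
  -- each component of h is divisible by p^(e i - 1)
  have hdvd : ∀ i, p ^ (e i - 1) ∣ (h i).val := by
    intro i
    have h0 : (p : ZMod (p ^ e i)) * h i = 0 := by
      have := congrFun hh i
      simpa [nsmul_eq_mul] using this
    have : ((p * (h i).val : ℕ) : ZMod (p ^ e i)) = 0 := by
      push_cast
      rw [ZMod.natCast_val, ZMod.cast_id]
      exact h0
    rw [ZMod.natCast_eq_zero_iff] at this
    -- p ^ e i ∣ p * val
    have h1i := he i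
    have h2 : p ^ (e i - 1) * p ∣ (h i).val * p := by
      rw [← pow_succ, show e i - 1 + 1 = e i by omega, mul_comm ((h i).val) p]
      exact this
    exact (Nat.mul_dvd_mul_iff_right hp.pos).mp h2
  set a : ι → ℕ := fun i => (h i).val / p ^ (e i - 1) with ha
  have hval : ∀ i, (h i).val = p ^ (e i - 1) * a i := fun i =>
    (Nat.mul_div_cancel' (hdvd i)).symm
  have ha0 : ∀ i, h i = 0 → a i = 0 := by
    intro i hi
    have : (h i).val = 0 := by rw [hi]; simp
    rw [ha]; simp [this]
  -- choose j with minimal e among nonzero components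
  obtain ⟨i₀, hi₀⟩ : ∃ i, h i ≠ 0 := by
    by_contra hcon
    push_neg at hcon
    exact hne (funext hcon)
  obtain ⟨j, hjmem, hjmin⟩ := Finset.exists_min_image
    (Finset.univ.filter (fun i => h i ≠ 0)) e ⟨i₀, by simp [hi₀]⟩
  have hj : h j ≠ 0 := by simpa using hjmem
  have hjle : ∀ i, h i ≠ 0 → e j ≤ e i := fun i hi => hjmin i (by simp [hi])
  -- define x
  set x : ∀ i, ZMod (p ^ e i) := fun i => ((a i * p ^ (e i - e j) : ℕ) : ZMod (p ^ e i)) with hx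
  have keyx : p ^ (e j - 1) • x = h := by
    funext i
    rw [Pi.smul_apply, hx]
    show p ^ (e j - 1) • ((a i * p ^ (e i - e j) : ℕ) : ZMod (p ^ e i)) = h i
    by_cases hi : h i = 0
    · simp [ha0 i hi, hi]
    · have h1 : 1 ≤ e j := he j
      have h2 : e j ≤ e i := hjle i hi
      have : p ^ (e j - 1) • ((a i * p ^ (e i - e j) : ℕ) : ZMod (p ^ e i))
          = ((p ^ (e j - 1) * (a i * p ^ (e i - e j)) : ℕ) : ZMod (p ^ e i)) := by
        push_cast [nsmul_eq_mul]
        ring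
      rw [this]
      have harith : p ^ (e j - 1) * (a i * p ^ (e i - e j)) = p ^ (e i - 1) * a i := by
        rw [← mul_assoc, mul_comm (p ^ (e j - 1)) (a i), mul_assoc, ← pow_add,
          show e j - 1 + (e i - e j) = e i - 1 by omega, mul_comm]
      rw [harith, ← hval i, ZMod.natCast_val, ZMod.cast_id]
  have keyord : (p ^ e j : ℤ) • x = 0 := by
    funext i
    rw [Pi.smul_apply, hx, Pi.zero_apply]
    by_cases hi : h i = 0
    · simp [ha0 i hi]
    · have h2 : e j ≤ e i := hjle i hi
      have : (p ^ e j : ℤ) • ((a i * p ^ (e i - e j) : ℕ) : ZMod (p ^ e i))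
          = ((p ^ e j * (a i * p ^ (e i - e j)) : ℕ) : ZMod (p ^ e i)) := by
        push_cast [zsmul_eq_mul]
        ring
      rw [this]
      have harith : p ^ e j * (a i * p ^ (e i - e j)) = a i * p ^ e i := by
        rw [← mul_assoc, mul_comm (p ^ e j) (a i), mul_assoc, ← pow_add,
          show e j + (e i - e j) = e i by omega]
      rw [harith, ZMod.natCast_eq_zero_iff]
      exact dvd_mul_left _ _
  -- x j is a unit
  have hxj : x j = ((a j : ℕ) : ZMod (p ^ e j)) := by
    rw [hx]
    simp
  have haj_ne : a j ≠ 0 := by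
    intro hcon
    apply hj
    rw [← ZMod.val_eq_zero, hval j, hcon, mul_zero]
  have haj_lt : a j < p := by
    have hlt : (h j).val < p ^ e j := ZMod.val_lt _
    rw [hval j] at hlt
    have h1j := he j
    have hej : e j = (e j - 1) + 1 := by omega
    rw [hej, pow_succ] at hlt
    exact lt_of_mul_lt_mul_left hlt (Nat.zero_le _)
  have hndvd : ¬ p ∣ a j := fun hcon =>
    absurd (Nat.le_of_dvd (Nat.pos_of_ne_zero haj_ne) hcon) (not_le.mpr haj_lt)
  have hunit : IsUnit ((a j : ℕ) : ZMod (p ^ e j)) := by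
    rw [ZMod.isUnit_iff_coprime]
    exact ((Nat.Prime.coprime_iff_not_dvd hp).mpr hndvd).symm.pow_right _
  -- the change of basis homomorphism
  haveI : ∀ i, Fintype (ZMod (p ^ e i)) := fun i => ZMod.fintype _
  have hgt1 : 1 < p ^ e j := by
    have := he j
    calc 1 < p := hp.one_lt
    _ ≤ p ^ e j := Nat.le_self_pow (by omega) p
  haveI : Fact (1 < p ^ e j) := ⟨hgt1⟩
  let updZ : (∀ i, ZMod (p ^ e i)) →+ (∀ i, ZMod (p ^ e i)) :=
    { toFun := fun f => Function.update f j 0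
      map_zero' := Function.update_eq_self j (0 : ∀ i, ZMod (p ^ e i))
      map_add' := fun f g => by
        funext k
        by_cases hk : k = j
        · subst hk
          simp [Function.update_self]
        · simp [Function.update_of_ne hk] }
  have hker0 : (zmultiplesHom (∀ i, ZMod (p ^ e i))) x ((p ^ e j : ℕ) : ℤ) = 0 := by
    rw [zmultiplesHom_apply]
    push_cast
    exact keyord
  let lifthom : ZMod (p ^ e j) →+ (∀ i, ZMod (p ^ e i)) :=
    ZMod.lift (p ^ e j) ⟨zmultiplesHom _ x, hker0⟩
  have hlift : ∀ c : ZMod (p ^ e j), lifthom c = c.val • x := by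
    intro c
    have hcast : ((c.val : ℤ) : ZMod (p ^ e j)) = c := by
      push_cast
      rw [ZMod.natCast_val, ZMod.cast_id]
    calc lifthom c = lifthom ((c.val : ℤ) : ZMod (p ^ e j)) := (congrArg lifthom hcast).symm
    _ = (c.val : ℤ) • x := ZMod.lift_coe _ _ _
    _ = c.val • x := natCast_zsmul x c.val
  let ψ : (∀ i, ZMod (p ^ e i)) →+ (∀ i, ZMod (p ^ e i)) :=
    updZ + lifthom.comp (Pi.evalAddMonoidHom _ j)
  have hψ : ∀ f : ∀ i, ZMod (p ^ e i), ψ f = Function.update f j 0 + ((f j).val) • x := by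
    intro f
    show updZ f + lifthom (f j) = _
    rw [hlift]
    rfl
  have hinj : Function.Injective ψ := by
    rw [injective_iff_map_eq_zero]
    intro f hf
    rw [hψ] at hf
    have hfj : f j = 0 := by
      have hcj := congrFun hf j
      rw [Pi.add_apply, Function.update_self, zero_add, Pi.smul_apply, hxj, Pi.zero_apply] at hcj
      have : f j * ((a j : ℕ) : ZMod (p ^ e j)) = 0 := by
        rw [← hcj, nsmul_eq_mul, ZMod.natCast_val, ZMod.cast_id]
      exact (IsUnit.mul_left_eq_zero hunit).mp this
    funext k
    have hck := congrFun hf k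
    rw [Pi.add_apply, Pi.smul_apply, hfj, ZMod.val_zero, zero_smul, add_zero, Pi.zero_apply] at hck
    by_cases hk : k = j
    · subst hk; exact hfj
    · rwa [Function.update_of_ne hk] at hck
  have hbij : Function.Bijective ψ := ⟨hinj, Finite.surjective_of_injective hinj⟩
  -- the standard basis
  have hctop : ∀ i, zmultiples ((1 : ZMod (p ^ e i))) = ⊤ := by
    intro i
    rw [eq_top_iff]
    intro y _
    refine ⟨(y.val : ℤ), ?_⟩
    show (y.val : ℤ) • (1 : ZMod (p ^ e i)) = y
    rw [zsmul_eq_mul, mul_one]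
    push_cast
    rw [ZMod.natCast_val, ZMod.cast_id]
  obtain ⟨hind, hsup⟩ := pi_basis (fun i => (1 : ZMod (p ^ e i))) hctop
  refine ⟨fun i => ψ (Pi.single i (1 : ZMod (p ^ e i))), j, ?_, ?_, ?_⟩
  · have hmapped := (iSupIndep_map_orderIso_iff
      (mapAddSubgroupIso (AddEquiv.ofBijective ψ hbij))).mpr hind
    have heq : (mapAddSubgroupIso (AddEquiv.ofBijective ψ hbij)) ∘
        (fun i => zmultiples (Pi.single i (1 : ZMod (p ^ e i)) : ∀ i, ZMod (p ^ e i))) =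
        fun i => zmultiples (ψ (Pi.single i (1 : ZMod (p ^ e i)))) := by
      funext i
      show AddSubgroup.map _ _ = _
      rw [AddMonoidHom.map_zmultiples]
      rfl
    rwa [heq] at hmapped
  · have hmap : ∀ i, zmultiples (ψ (Pi.single i (1 : ZMod (p ^ e i)))) =
        AddSubgroup.map ψ (zmultiples (Pi.single i (1 : ZMod (p ^ e i)) : ∀ i, ZMod (p ^ e i))) :=
      fun i => (AddMonoidHom.map_zmultiples ψ _).symm
    simp_rw [hmap, ← (AddSubgroup.gc_map_comap ψ).l_iSup, hsup]
    exact AddSubgroup.map_top_of_surjective ψ hbij.2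
  · have hgj : ψ (Pi.single j (1 : ZMod (p ^ e j))) = x := by
      rw [hψ]
      have h1 : Function.update (Pi.single j (1 : ZMod (p ^ e j)) : ∀ i, ZMod (p ^ e i)) j 0
          = 0 := by
        funext k
        by_cases hk : k = j
        · subst hk; simp
        · rw [Function.update_of_ne hk, Pi.zero_apply]
          exact Pi.single_eq_of_ne hk _
      have h2 : (Pi.single j (1 : ZMod (p ^ e j)) : ∀ i, ZMod (p ^ e i)) j = 1 :=
        Pi.single_eq_same _ _
      rw [h1, h2, zero_add, ZMod.val_one _, one_smul]
    show h ∈ zmultiples (ψ (Pi.single j (1 : ZMod (p ^ e j))))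
    rw [hgj]
    refine ⟨((p ^ (e j - 1) : ℕ) : ℤ), ?_⟩
    show ((p ^ (e j - 1) : ℕ) : ℤ) • x = h
    rw [natCast_zsmul]
    exact keyx



/-- zmultiples corresponds to zpowers under `AddSubgroup.toSubgroup`. -/
lemma toSubgroup_zmultiples {A : Type*} [AddGroup A] (a : A) :
    AddSubgroup.toSubgroup (AddSubgroup.zmultiples a) =
      Subgroup.zpowers (Multiplicative.ofAdd a) := by
  ext x
  constructor
  · rintro ⟨n, hn⟩
    dsimp only at hn
    refine ⟨n, ?_⟩
    show Multiplicative.ofAdd a ^ n = x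
    rw [← ofAdd_zsmul, hn, ofAdd_toAdd]
  · rintro ⟨n, hn⟩
    exact ⟨n, by simpa using congrArg Multiplicative.toAdd hn⟩

/-- Transport an independent generating family along the mult/add correspondence. -/
lemma toMul_transport {A : Type*} [AddCommGroup A] {ι : Type*} (g : ι → A)
    (hind : iSupIndep (fun i => AddSubgroup.zmultiples (g i)))
    (hsup : (⨆ i, AddSubgroup.zmultiples (g i)) = ⊤) :
    iSupIndep (fun i => Subgroup.zpowers (Multiplicative.ofAdd (g i))) ∧
      (⨆ i, Subgroup.zpowers (Multiplicative.ofAdd (g i))) = ⊤ := by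
  have hind' := (iSupIndep_map_orderIso_iff
    (AddSubgroup.toSubgroup (A := A))).mpr hind
  have heq : (AddSubgroup.toSubgroup (A := A)) ∘ (fun i => AddSubgroup.zmultiples (g i)) =
      fun i => Subgroup.zpowers (Multiplicative.ofAdd (g i)) := by
    funext i
    exact toSubgroup_zmultiples (g i)
  refine ⟨by rwa [heq] at hind', ?_⟩
  calc (⨆ i, Subgroup.zpowers (Multiplicative.ofAdd (g i)))
      = ⨆ i, AddSubgroup.toSubgroup (AddSubgroup.zmultiples (g i)) :=
        iSup_congr fun i => (toSubgroup_zmultiples (g i)).symm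
    _ = AddSubgroup.toSubgroup (⨆ i, AddSubgroup.zmultiples (g i)) :=
        (OrderIso.map_iSup _ _).symm
    _ = ⊤ := by rw [hsup]; exact OrderIso.map_top _

/-- Transport an independent generating family along a `MulEquiv`. -/
lemma mulEquiv_transport {M N : Type*} [Group M] [Group N] (φ : M ≃* N) {ι : Type*} (g : ι → M)
    (hind : iSupIndep (fun i => Subgroup.zpowers (g i)))
    (hsup : (⨆ i, Subgroup.zpowers (g i)) = ⊤) :
    iSupIndep (fun i => Subgroup.zpowers (φ (g i))) ∧
      (⨆ i, Subgroup.zpowers (φ (g i))) = ⊤ := by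
  have hind' := (iSupIndep_map_orderIso_iff (φ.mapSubgroup)).mpr hind
  have heq : (φ.mapSubgroup) ∘ (fun i => Subgroup.zpowers (g i)) =
      fun i => Subgroup.zpowers (φ (g i)) := by
    funext i
    show Subgroup.map _ _ = _
    rw [MonoidHom.map_zpowers]
    rfl
  refine ⟨by rwa [heq] at hind', ?_⟩
  have hmap : ∀ i, Subgroup.zpowers (φ (g i)) =
      Subgroup.map φ.toMonoidHom (Subgroup.zpowers (g i)) := fun i =>
    (MonoidHom.map_zpowers φ.toMonoidHom (g i)).symm
  simp_rw [hmap, ← (Subgroup.gc_map_comap (φ.toMonoidHom)).l_iSup, hsup]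
  exact Subgroup.map_top_of_surjective _ φ.surjective


lemma rank_lower (p : ℕ) (hp : p.Prime) (ι : Type*) [Fintype ι] [NeZero p] :
    Fintype.card ι ≤ Group.rank (Multiplicative (∀ i : ι, ZMod p)) := by
  haveI : Fact p.Prime := ⟨hp⟩
  haveI : NeZero p := ⟨hp.ne_zero⟩
  obtain ⟨S, hScard, hScl⟩ := Group.rank_spec (Multiplicative (∀ i : ι, ZMod p))
  classical
  set T : Finset (∀ i : ι, ZMod p) := S.image Multiplicative.toAdd with hT
  have hspan : Submodule.span (ZMod p) (↑T : Set (∀ i : ι, ZMod p)) = ⊤ := by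
    rw [eq_top_iff]
    intro v _
    have hv : Multiplicative.ofAdd v ∈ Subgroup.closure (S : Set (Multiplicative (∀ i, ZMod p))) := by
      rw [hScl]; trivial
    refine Subgroup.closure_induction
      (p := fun m _ => Multiplicative.toAdd m ∈ Submodule.span (ZMod p) (↑T : Set (∀ i : ι, ZMod p)))
      (fun y hy => Submodule.subset_span ?_) ?_ ?_ ?_ hv
    · exact Finset.mem_coe.2 (Finset.mem_image_of_mem _ hy)
    · exact Submodule.zero_mem _
    · intro y z _ _ hy hz
      exact Submodule.add_mem _ hy hz
    · intro y _ hy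
      exact Submodule.neg_mem _ hy
  haveI : Fintype (↑(T : Finset (∀ i : ι, ZMod p)) : Set (∀ i : ι, ZMod p)) := FinsetCoe.fintype T
  have h1 : Module.finrank (ZMod p) (∀ i : ι, ZMod p) = Fintype.card ι := Module.finrank_pi _
  have h2 := finrank_span_le_card (R := ZMod p) (↑T : Set (∀ i : ι, ZMod p))
  rw [hspan, finrank_top, h1, Finset.toFinset_coe] at h2
  calc Fintype.card ι ≤ T.card := h2
    _ ≤ S.card := Finset.card_image_le
    _ = _ := hScard



lemma lemQ {G : Type*} [CommGroup G] {ι : Type*} (H : Subgroup G) (g : ι → G)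
    (hind : iSupIndep (fun i => zpowers (g i))) (hsup : (⨆ i, zpowers (g i)) = ⊤)
    (j : ι) (hHj : H ≤ zpowers (g j)) :
    iSupIndep (fun i => zpowers (QuotientGroup.mk' H (g i))) ∧
      (⨆ i, zpowers (QuotientGroup.mk' H (g i))) = (⊤ : Subgroup (G ⧸ H)) := by
  set π := QuotientGroup.mk' H
  have hmap : ∀ i, zpowers (π (g i)) = (zpowers (g i)).map π := fun i =>
    (MonoidHom.map_zpowers π (g i)).symm
  have hmapsup : ∀ (s : ι → Prop), (⨆ (i) (_ : s i), zpowers (π (g i))) =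
      (⨆ (i) (_ : s i), zpowers (g i)).map π := by
    intro s
    simp_rw [hmap, ← (Subgroup.gc_map_comap π).l_iSup]
  constructor
  · intro i
    rw [Subgroup.disjoint_def]
    intro y hy1 hy2
    simp only [hmap] at hy1
    simp only [hmapsup] at hy2
    obtain ⟨a, ha, hay⟩ := hy1
    obtain ⟨b, hb, hby⟩ := hy2
    have hab : a * b⁻¹ ∈ H := by
      have : π (a * b⁻¹) = 1 := by
        rw [map_mul, map_inv, hay, hby, mul_inv_cancel]
      rwa [← QuotientGroup.ker_mk' H, MonoidHom.mem_ker]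
    have hdisj := hind i
    rw [Subgroup.disjoint_def] at hdisj
    by_cases hij : i = j
    · subst hij
      have hbA : b ∈ zpowers (g i) := by
        have : (a * b⁻¹)⁻¹ * a ∈ zpowers (g i) := mul_mem (inv_mem (hHj hab)) ha
        simpa using this
      have : b = 1 := hdisj hbA hb
      simp [← hby, this]
    · have haB : a ∈ ⨆ (k) (_ : k ≠ i), zpowers (g k) := by
        have hj' : zpowers (g j) ≤ ⨆ (k) (_ : k ≠ i), zpowers (g k) :=
          le_iSup₂ (f := fun (k : ι) (_ : k ≠ i) => zpowers (g k)) j fun h => hij h.symm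
        have : (a * b⁻¹) * b ∈ ⨆ (k) (_ : k ≠ i), zpowers (g k) :=
          mul_mem (hj' (hHj hab)) hb
        simpa using this
      have : a = 1 := hdisj ha haB
      simp [← hay, this]
  · rw [show (⨆ i, zpowers (π (g i))) = ⨆ (i) (_ : True), zpowers (π (g i)) by simp,
      hmapsup]
    have : (⨆ (i) (_ : True), zpowers (g i)) = ⊤ := by simpa using hsup
    rw [this]
    exact Subgroup.map_top_of_surjective π (QuotientGroup.mk'_surjective H)


/-- Statement (6.2): Let `G` be a finite abelian `p`-group of rank `t ≥ 1`, `H` a subgroup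
of `G` of order `p`, and `π : G → G/H` the natural projection.  Then there exist elements
`g₁, …, g_t` of `G` such that the internal product of the cyclic subgroups `⟨gᵢ⟩` is direct
and equal to `G`, and the internal product of the cyclic subgroups `⟨π gᵢ⟩` is direct and
equal to `G/H`. -/
theorem abelian_pGroup_basis_adapted_to_quotient
    (p : ℕ) (hp : p.Prime) (G : Type*) [CommGroup G] [Finite G]
    (hG : IsPGroup p G) (t : ℕ) (ht : 1 ≤ t) (hrank : Group.rank G = t)
    (H : Subgroup G) (hH : Nat.card H = p) :
    ∃ g : Fin t → G,
      iSupIndep (fun i => Subgroup.zpowers (g i)) ∧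
      (⨆ i, Subgroup.zpowers (g i)) = ⊤ ∧
      iSupIndep (fun i => Subgroup.zpowers (QuotientGroup.mk' H (g i))) ∧
      (⨆ i, Subgroup.zpowers (QuotientGroup.mk' H (g i))) = (⊤ : Subgroup (G ⧸ H)) := by
  classical
  haveI : Fact p.Prime := ⟨hp⟩
  haveI : NeZero p := ⟨hp.ne_zero⟩
  obtain ⟨ι, fι, n, h1n, ⟨φ₀⟩⟩ := CommGroup.equiv_prod_multiplicative_zmod_of_finite G
  haveI := fι
  haveI : ∀ i, NeZero (n i) := fun i => ⟨by have := h1n i; omega⟩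
  obtain ⟨k, hk⟩ := IsPGroup.iff_card.mp hG
  have hcard : ∏ i, n i = p ^ k := by
    rw [← hk, Nat.card_congr φ₀.toEquiv, Nat.card_pi]
    exact Finset.prod_congr rfl fun i _ =>
      ((Nat.card_congr Multiplicative.toAdd).trans (Nat.card_zmod (n i))).symm
  have hdvd : ∀ i, n i ∣ p ^ k := fun i => hcard ▸ Finset.dvd_prod_of_mem n (Finset.mem_univ i)
  have hpow : ∀ i, ∃ m, m ≤ k ∧ n i = p ^ m := fun i => (Nat.dvd_prime_pow hp).mp (hdvd i)
  choose e hek hee using hpow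
  have he1 : ∀ i, 1 ≤ e i := by
    intro i
    by_contra hcon
    push_neg at hcon
    interval_cases h : e i
    · have := h1n i
      rw [hee i, h, pow_zero] at this
      omega
  let ζ : ∀ i, Multiplicative (ZMod (n i)) ≃* Multiplicative (ZMod (p ^ e i)) := fun i =>
    AddEquiv.toMultiplicative (ZMod.ringEquivCongr (hee i)).toAddEquiv
  let φ : G ≃* Multiplicative (∀ i, ZMod (p ^ e i)) :=
    φ₀.trans ((MulEquiv.piCongrRight ζ).trans
      (MulEquiv.piMultiplicative (fun i => ZMod (p ^ e i))).symm)
  -- a generator of H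
  haveI : Nontrivial H := Finite.one_lt_card_iff_nontrivial.mp (by rw [hH]; exact hp.one_lt)
  obtain ⟨y, hy⟩ := exists_ne (1 : H)
  have hy1 : (y : G) ≠ 1 := by
    intro hcon
    exact hy (Subtype.ext hcon)
  have hyord : orderOf y = p := by
    have hdvd' : orderOf y ∣ p := hH ▸ orderOf_dvd_natCard y
    rcases (Nat.dvd_prime hp).mp hdvd' with h1 | h1
    · exact absurd (orderOf_eq_one_iff.mp h1) hy
    · exact h1
  have hordG : orderOf (y : G) = p := by
    rw [← hyord]
    exact orderOf_injective H.subtype H.subtype_injective y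
  have hHeq : Subgroup.zpowers (y : G) = H := by
    apply Subgroup.eq_of_le_of_card_ge (Subgroup.zpowers_le.2 y.2)
    rw [hH, Nat.card_zpowers, hordG]
  -- the additive version of the generator
  set hA : ∀ i, ZMod (p ^ e i) := Multiplicative.toAdd (φ (y : G)) with hhA
  have hyp1 : (y : G) ^ p = 1 := by rw [← hordG]; exact pow_orderOf_eq_one _
  have hhp : p • hA = 0 := by
    have h1 : (φ (y : G)) ^ p = 1 := by rw [← map_pow, hyp1, map_one]
    calc p • hA = Multiplicative.toAdd ((φ (y : G)) ^ p) := (toAdd_pow _ _).symm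
      _ = 0 := by rw [h1]; rfl
  have hAne : hA ≠ 0 := by
    intro hcon
    apply hy1
    have h1 : φ (y : G) = 1 := by
      rw [← ofAdd_toAdd (φ (y : G)), ← hhA, hcon, ofAdd_zero]
    have := congrArg φ.symm h1
    rwa [MulEquiv.symm_apply_apply, map_one] at this
  obtain ⟨gA, j, hindA, hsupA, hmemA⟩ := pi_adapted p hp e he1 hA hhp hAne
  obtain ⟨hindM, hsupM⟩ := toMul_transport gA hindA hsupA
  obtain ⟨hindG, hsupG⟩ := mulEquiv_transport φ.symm
    (fun i => Multiplicative.ofAdd (gA i)) hindM hsupM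
  set gG : ι → G := fun i => φ.symm (Multiplicative.ofAdd (gA i)) with hgG
  have hHle : H ≤ Subgroup.zpowers (gG j) := by
    rw [← hHeq]
    apply Subgroup.zpowers_le.2
    obtain ⟨m, hm⟩ := hmemA
    dsimp only at hm
    refine ⟨m, ?_⟩
    show (φ.symm (Multiplicative.ofAdd (gA j))) ^ m = (y : G)
    rw [← map_zpow, ← ofAdd_zsmul, hm, hhA, ofAdd_toAdd, MulEquiv.symm_apply_apply]
  -- the rank computation
  have hle1 : Group.rank G ≤ Fintype.card ι := by
    have hcl : Subgroup.closure (↑(Finset.image gG Finset.univ) : Set G) = ⊤ := by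
      rw [Finset.coe_image, Finset.coe_univ, Set.image_univ]
      apply le_antisymm le_top
      rw [← hsupG]
      exact iSup_le fun i =>
        Subgroup.zpowers_le.2 (Subgroup.subset_closure (Set.mem_range_self i))
    calc Group.rank G ≤ (Finset.image gG Finset.univ).card := Group.rank_le hcl
      _ ≤ Finset.univ.card := Finset.card_image_le
      _ = Fintype.card ι := Finset.card_univ
  have hge1 : Fintype.card ι ≤ Group.rank G := by
    let ρA : (∀ i, ZMod (p ^ e i)) →+ (∀ i : ι, ZMod p) :=
      AddMonoidHom.mk' (fun f i =>
        ZMod.castHom (dvd_pow_self p (by have := he1 i; omega : e i ≠ 0)) (ZMod p) (f i))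
        (by intro f g; funext i; exact map_add (ZMod.castHom (dvd_pow_self p (by have := he1 i; omega : e i ≠ 0)) (ZMod p)) (f i) (g i))
    let ρ : G →* Multiplicative (∀ i : ι, ZMod p) :=
      (AddMonoidHom.toMultiplicative ρA).comp φ.toMonoidHom
    have hρ : Function.Surjective ρ := by
      intro v
      have hcomp : ∀ i, ∃ w : ZMod (p ^ e i),
          ZMod.castHom (dvd_pow_self p (by have := he1 i; omega : e i ≠ 0)) (ZMod p) w
            = Multiplicative.toAdd v i := by
        intro i
        refine ⟨((Multiplicative.toAdd v i).val : ZMod (p ^ e i)), ?_⟩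
        rw [map_natCast, ZMod.natCast_val, ZMod.cast_id]
      choose w hw using hcomp
      refine ⟨φ.symm (Multiplicative.ofAdd w), ?_⟩
      show (AddMonoidHom.toMultiplicative ρA) (φ (φ.symm (Multiplicative.ofAdd w))) = v
      rw [MulEquiv.apply_symm_apply]
      show Multiplicative.ofAdd (ρA w) = v
      rw [← ofAdd_toAdd v]
      congr 1
      funext i
      exact hw i
    calc Fintype.card ι ≤ Group.rank (Multiplicative (∀ i : ι, ZMod p)) := rank_lower p hp ι
      _ ≤ Group.rank G := Group.rank_le_of_surjective ρ hρ
  have hcardι : Fintype.card ι = t := le_antisymm (hrank ▸ hge1) (hrank ▸ hle1)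
  let σ : Fin t ≃ ι := (Fintype.equivFinOfCardEq hcardι).symm
  have hHle' : H ≤ Subgroup.zpowers ((gG ∘ σ) (σ.symm j)) := by
    simpa using hHle
  have hind' : iSupIndep (fun i : Fin t => Subgroup.zpowers ((gG ∘ σ) i)) :=
    iSupIndep.comp hindG σ.injective
  have hsup' : (⨆ i : Fin t, Subgroup.zpowers ((gG ∘ σ) i)) = ⊤ := by
    rw [← hsupG]
    exact σ.iSup_comp (g := fun i => Subgroup.zpowers (gG i))
  obtain ⟨hq1, hq2⟩ := lemQ H (gG ∘ σ) hind' hsup' (σ.symm j) hHle'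
  exact ⟨gG ∘ σ, hind', hsup', hq1, hq2⟩
end

section
/- Let E be a field, M/E a finite abelian Galois extension with M ≠ E, Π the set of prime divisors of [M:E], and for each p ∈ Π let M_p be the intersection of M with the maximal p-extension of E (equivalently, the fixed field of the p'-Hall subgroup of Gal(M/E)). Then M is the compositum of the fields M_p for p ∈ Π, the norm group N(M/E) equals the intersection ⋂_{p∈Π} N(M_p/E), and E*/N(M/E) is isomorphic to the direct product ∏_{p∈Π} E*/N(M_p/E). -/
noncomputable def normGroup {E M : Type*} [Field E] [Field M] [Algebra E M]
    (L : IntermediateField E M) : Subgroup Eˣ :=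
  (Units.map (Algebra.norm E : L →* E)).range

noncomputable def normGroupTop (E M : Type*) [Field E] [Field M] [Algebra E M] :
    Subgroup Eˣ :=
  (Units.map (Algebra.norm E : M →* E)).range

section aux
variable {E M : Type*} [Field E] [Field M] [Algebra E M]

lemma normGroupTop_le_normGroup [FiniteDimensional E M] [Algebra.IsSeparable E M]
    (L : IntermediateField E M) : normGroupTop E M ≤ normGroup L := by
  rintro _ ⟨v, rfl⟩
  refine ⟨Units.map (Algebra.norm L : M →* L) v, ?_⟩
  ext
  simp only [Units.coe_map, MonoidHom.coe_coe]
  exact Algebra.norm_norm (R := E) (S := ↥L) (a := (v : M))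

lemma pow_finrank_mem_normGroup (L : IntermediateField E M) (u : Eˣ) :
    u ^ (Module.finrank E L) ∈ normGroup L := by
  refine ⟨Units.map (algebraMap E L).toMonoidHom u, ?_⟩
  ext
  simp only [Units.coe_map, MonoidHom.coe_coe, RingHom.toMonoidHom_eq_coe, RingHom.coe_coe,
    Units.val_pow_eq_pow_val]
  exact Algebra.norm_algebraMap (S := L) (u : E)

lemma pow_mem_normGroupTop [FiniteDimensional E M] [Algebra.IsSeparable E M]
    (L : IntermediateField E M) {u : Eˣ} (hu : u ∈ normGroup L) :
    u ^ (Module.finrank L M) ∈ normGroupTop E M := by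
  obtain ⟨v, rfl⟩ := hu
  refine ⟨Units.map (algebraMap L M).toMonoidHom v, ?_⟩
  ext
  simp only [Units.coe_map, MonoidHom.coe_coe, RingHom.toMonoidHom_eq_coe, RingHom.coe_coe,
    Units.val_pow_eq_pow_val]
  rw [← Algebra.norm_norm (R := E) (S := ↥L) (a := (algebraMap L M) (v : L)),
    Algebra.norm_algebraMap, map_pow]

end aux

lemma quotient_iInf_equiv {G : Type*} [CommGroup G] {ι : Type*} (N : ι → Subgroup G)
    (hsurj : Function.Surjective
      (fun (g : G) (i : ι) => (QuotientGroup.mk g : G ⧸ N i))) :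
    Nonempty ((G ⧸ (⨅ i, N i)) ≃* ∀ i, G ⧸ N i) := by
  let φ : G →* ∀ i, G ⧸ N i :=
    MonoidHom.mk' (fun g i => QuotientGroup.mk g)
      (by intro a b; funext i; exact QuotientGroup.mk_mul _ _ _)
  have hker : φ.ker = ⨅ i, N i := by
    ext u
    simp only [MonoidHom.mem_ker, Subgroup.mem_iInf, funext_iff, MonoidHom.mk'_apply,
      Pi.one_apply, QuotientGroup.eq_one_iff, φ]
  rw [← hker]
  exact ⟨QuotientGroup.quotientKerEquivOfSurjective φ hsurj⟩

set_option maxHeartbeats 1000000 in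
/-- Lemma 2.1: let `M/E` be a finite abelian extension with `M ≠ E`, `Π` the set of prime
divisors of `[M:E]`, and for each `p ∈ Π` let `M_p = M ∩ E(p)` be the fixed field of a
`p'`-Hall subgroup of `Gal(M/E)`.  Then `M` is the compositum of the `M_p`,
`N(M/E) = ⋂_{p∈Π} N(M_p/E)`, and `E*/N(M/E) ≅ ∏_{p∈Π} E*/N(M_p/E)`. -/
theorem abelian_ext_decomposes_into_primary_parts
    (E M : Type*) [Field E] [Field M] [Algebra E M] [FiniteDimensional E M]
    [IsGalois E M] (hab : ∀ σ τ : M ≃ₐ[E] M, σ * τ = τ * σ)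
    (hne : Module.finrank E M ≠ 1)
    (Mp : {q : ℕ // q.Prime ∧ q ∣ Module.finrank E M} → IntermediateField E M)
    (hMp : ∀ q : {q : ℕ // q.Prime ∧ q ∣ Module.finrank E M}, ∃ H : Subgroup (M ≃ₐ[E] M),
      (¬ (q : ℕ) ∣ Nat.card H) ∧ (∃ k : ℕ, H.index = (q : ℕ) ^ k) ∧
      Mp q = IntermediateField.fixedField H) :
    (⨆ q, Mp q) = ⊤ ∧
    normGroupTop E M = ⨅ q, normGroup (Mp q) ∧
    Nonempty ((Eˣ ⧸ normGroupTop E M) ≃*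
      ∀ q : {q : ℕ // q.Prime ∧ q ∣ Module.finrank E M}, Eˣ ⧸ normGroup (Mp q)) := by
  classical
  have hn0 : Module.finrank E M ≠ 0 := Module.finrank_pos.ne'
  haveI : Fintype {q : ℕ // q.Prime ∧ q ∣ Module.finrank E M} :=
    Fintype.subtype (Module.finrank E M).primeFactors (fun q => by
      rw [Nat.mem_primeFactors]
      tauto)
  choose H hH1 hH2 hH3 using hMp
  have hcard : Nat.card (M ≃ₐ[E] M) = Module.finrank E M := by
    rw [IsGalois.card_aut_eq_finrank]
  -- the intersection of the Hall subgroups is trivial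
  have hinf : (⨅ q, H q) = ⊥ := by
    rw [eq_bot_iff]
    intro σ hσ
    simp only [Subgroup.mem_iInf] at hσ
    rw [Subgroup.mem_bot]
    by_contra hσ1
    have h1 : orderOf σ ≠ 1 := by simpa [orderOf_eq_one_iff] using hσ1
    obtain ⟨p, hp, hpd⟩ := Nat.exists_prime_and_dvd h1
    have hpn : p ∣ Module.finrank E M := hpd.trans (hcard ▸ orderOf_dvd_natCard σ)
    exact hH1 ⟨p, hp, hpn⟩
      (hpd.trans ((H ⟨p, hp, hpn⟩).orderOf_dvd_natCard (hσ ⟨p, hp, hpn⟩)))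
  have part1 : (⨆ q, Mp q) = ⊤ := by
    have hfix : IntermediateField.fixingSubgroup (⨆ q, Mp q) = ⊥ := by
      rw [eq_bot_iff, ← hinf, le_iInf_iff]
      intro q
      rw [← IntermediateField.fixingSubgroup_fixedField (H q), ← hH3 q]
      exact IntermediateField.fixingSubgroup_antitone (le_iSup Mp q)
    have hbot : IntermediateField.fixedField (⊥ : Subgroup (M ≃ₐ[E] M)) = ⊤ := by
      rw [eq_top_iff]
      rintro x - ⟨g, hg⟩
      rw [Subgroup.mem_bot] at hg
      subst hg
      rfl
    rw [← IsGalois.fixedField_fixingSubgroup (⨆ q, Mp q), hfix, hbot]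
  obtain ⟨p0, hp0, hp0d⟩ := Nat.exists_prime_and_dvd hne
  let q0 : {q : ℕ // q.Prime ∧ q ∣ Module.finrank E M} := ⟨p0, hp0, hp0d⟩
  have hm : ∀ q, Module.finrank (Mp q) M = Nat.card (H q) := by
    intro q
    rw [hH3 q]
    exact IntermediateField.finrank_fixedField_eq_card (H q)
  have hmdvd : ∀ q, Module.finrank (Mp q) M ∣ Module.finrank E M := fun q =>
    Dvd.intro_left _ (Module.finrank_mul_finrank E (Mp q) M)
  have hgcd : Finset.univ.gcd (fun q => Module.finrank (Mp q) M) = 1 := by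
    by_contra hd
    obtain ⟨p, hp, hpd⟩ := Nat.exists_prime_and_dvd hd
    have hdm : ∀ q, p ∣ Module.finrank (Mp q) M := fun q =>
      hpd.trans (Finset.gcd_dvd (Finset.mem_univ q))
    have hpn : p ∣ Module.finrank E M := (hdm q0).trans (hmdvd q0)
    exact hH1 ⟨p, hp, hpn⟩ (by rw [← hm]; exact hdm ⟨p, hp, hpn⟩)
  have part2 : normGroupTop E M = ⨅ q, normGroup (Mp q) := by
    refine le_antisymm (le_iInf fun q => normGroupTop_le_normGroup (Mp q)) ?_
    intro u hu
    rw [Subgroup.mem_iInf] at hu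
    have key : ∀ s : Finset {q : ℕ // q.Prime ∧ q ∣ Module.finrank E M},
        u ^ ((s.gcd (fun q => Module.finrank (Mp q) M) : ℕ) : ℤ) ∈ normGroupTop E M := by
      intro s
      induction s using Finset.induction_on with
      | empty => simpa using (normGroupTop E M).one_mem
      | insert a s' h ih =>
        rw [Finset.gcd_insert]
        rw [show (gcd (Module.finrank (Mp a) M) (s'.gcd fun q => Module.finrank (Mp q) M)) =
          Nat.gcd (Module.finrank (Mp a) M) (s'.gcd fun q => Module.finrank (Mp q) M) from rfl]
        rw [Nat.gcd_eq_gcd_ab, zpow_add, zpow_mul, zpow_mul]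
        refine Subgroup.mul_mem _ (Subgroup.zpow_mem _ ?_ _) (Subgroup.zpow_mem _ ?_ _)
        · rw [zpow_natCast]
          exact pow_mem_normGroupTop (Mp a) (hu a)
        · exact ih
    have h1 := key Finset.univ
    rw [hgcd] at h1
    simpa using h1
  -- Part 3
  have hdix : ∀ q, Module.finrank E (Mp q) = (H q).index := by
    intro q
    have h1 : Module.finrank E (Mp q) * Nat.card (H q) = Module.finrank E M := by
      rw [← hm q]; exact Module.finrank_mul_finrank E (Mp q) M
    have h2 : (H q).index * Nat.card (H q) = Module.finrank E M := by
      rw [mul_comm, Subgroup.card_mul_index, hcard]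
    have hpos : 0 < Nat.card (H q) := Nat.card_pos
    exact Nat.eq_of_mul_eq_mul_right hpos (h1.trans h2.symm)
  have hqd : ∀ q : {q : ℕ // q.Prime ∧ q ∣ Module.finrank E M}, (q : ℕ) ∣ Module.finrank E (Mp q) := by
    intro q
    have h1 : (q : ℕ) ∣ Module.finrank E (Mp q) * Module.finrank (Mp q) M := by
      rw [Module.finrank_mul_finrank E (Mp q) M]; exact q.2.2
    rcases (Nat.Prime.dvd_mul q.2.1).mp h1 with h | h
    · exact h
    · exact absurd (hm q ▸ h) (hH1 q)
  have hd1 : ∀ q, 1 < Module.finrank E (Mp q) := by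
    intro q
    have : 0 < Module.finrank E (Mp q) := Module.finrank_pos
    exact lt_of_lt_of_le q.2.1.one_lt (Nat.le_of_dvd this (hqd q))
  have hcop : ∀ q r, q ≠ r →
      Nat.Coprime (Module.finrank E (Mp q)) (Module.finrank E (Mp r)) := by
    intro q r hqr
    obtain ⟨kq, hkq⟩ := hH2 q
    obtain ⟨kr, hkr⟩ := hH2 r
    rw [hdix q, hdix r, hkq, hkr]
    exact Nat.Coprime.pow _ _ ((Nat.coprime_primes q.2.1 r.2.1).mpr fun h => hqr (Subtype.ext h))
  have hinv : ∀ q, ∃ e : ℕ, e % Module.finrank E (Mp q) = 1 ∧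
      ∀ r, r ≠ q → Module.finrank E (Mp r) ∣ e := by
    intro q
    have hc : Nat.Coprime (∏ r ∈ Finset.univ.erase q, Module.finrank E (Mp r))
        (Module.finrank E (Mp q)) :=
      Nat.Coprime.prod_left fun r hr => hcop r q (Finset.ne_of_mem_erase hr)
    obtain ⟨x, -, hx⟩ := Nat.exists_mul_mod_eq_one_of_coprime hc (hd1 q)
    refine ⟨(∏ r ∈ Finset.univ.erase q, Module.finrank E (Mp r)) * x, hx, fun r hr => ?_⟩
    exact (Finset.dvd_prod_of_mem _ (Finset.mem_erase.mpr ⟨hr, Finset.mem_univ r⟩)).mul_right x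
  choose e he1 he2 using hinv
  have hsurj : Function.Surjective
      (fun (u : Eˣ) (q : {q : ℕ // q.Prime ∧ q ∣ Module.finrank E M}) =>
        (QuotientGroup.mk u : Eˣ ⧸ normGroup (Mp q))) := by
    intro f
    choose a ha using fun q => QuotientGroup.mk_surjective (f q)
    refine ⟨∏ q, a q ^ e q, ?_⟩
    funext r
    show (QuotientGroup.mk' (normGroup (Mp r))) (∏ q, a q ^ e q) = f r
    rw [map_prod, Finset.prod_eq_single_of_mem r (Finset.mem_univ r) ?_]
    · have hrep : e r = Module.finrank E (Mp r) * (e r / Module.finrank E (Mp r)) + 1 := by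
        conv_lhs => rw [← Nat.div_add_mod (e r) (Module.finrank E (Mp r))]
        rw [he1 r]
      rw [QuotientGroup.mk'_apply, ← ha r]
      refine QuotientGroup.eq.mpr ?_
      obtain ⟨S, hS⟩ : ∃ S, e r = Module.finrank E (Mp r) * S + 1 := ⟨_, hrep⟩
      have h2 : (a r ^ e r)⁻¹ * a r = ((a r ^ Module.finrank E (Mp r)) ^ S)⁻¹ := by
        rw [hS, pow_succ, pow_mul]
        group
      rw [h2]
      exact Subgroup.inv_mem _ (Subgroup.pow_mem _ (pow_finrank_mem_normGroup (Mp r) (a r)) _)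
    · intro b _ hbr
      obtain ⟨t, ht⟩ := he2 b r hbr.symm
      rw [ht, pow_mul, QuotientGroup.mk'_apply, QuotientGroup.eq_one_iff]
      exact Subgroup.pow_mem _ (pow_finrank_mem_normGroup (Mp r) (a b)) _
  refine ⟨part1, part2, ?_⟩
  rw [part2]
  exact quotient_iInf_equiv (fun q => normGroup (Mp q)) hsurj
end
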